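/- arXiv:2111.03766 — 6 statements merged into one kernel-verified Lean document; each statement's English description precedes it below -/
import Mathlib

section
/- Fix A > 0 and a wavenumber α > 0. For every h ∈ M_A, the squared fundamental shallow sloshing frequency without surface tension, defined by λ^∞_{α,1}(h) := inf{ ∫_{−1}^{1} h(x)[(ψ′(x))² + α²ψ(x)²] dx : ψ ∈ C¹([−1,1]), ∫_{−1}^{1} ψ(x)² dx = 1 }, satisfies λ^∞_{α,1}(h) ≤ α²A/2. Moreover, equality holds for the rectangular cross-section: for the constant function h ≡ A/2 one has λ^∞_{α,1}(A/2) = α²A/2. -/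
/-- `h ∈ M_A`: continuous, nonnegative on `[-1,1]`, with `∫_{-1}^1 h = A`. -/
def MemMA (A : ℝ) (h : ℝ → ℝ) : Prop :=
  ContinuousOn h (Set.Icc (-1 : ℝ) 1) ∧ (∀ x ∈ Set.Icc (-1 : ℝ) 1, 0 ≤ h x) ∧
    (∫ x in (-1 : ℝ)..1, h x) = A

/-- The squared fundamental shallow sloshing frequency without surface tension:
`λ^∞_{α,1}(h) = inf { ∫_{-1}^1 h [(ψ')² + α² ψ²] : ψ ∈ C¹, ∫ ψ² = 1 }`. -/
noncomputable def lamInf (α : ℝ) (h : ℝ → ℝ) : ℝ :=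
  sInf {E : ℝ | ∃ ψ : ℝ → ℝ, ContDiff ℝ 1 ψ ∧
    (∫ x in (-1 : ℝ)..1, (ψ x) ^ 2) = 1 ∧
    E = ∫ x in (-1 : ℝ)..1, h x * ((deriv ψ x) ^ 2 + α ^ 2 * (ψ x) ^ 2)}

theorem isoperimetric_no_surface_tension (A α : ℝ) (hA : 0 < A) (hα : 0 < α) :
    (∀ h : ℝ → ℝ, MemMA A h → lamInf α h ≤ α ^ 2 * A / 2) ∧
    lamInf α (fun _ => A / 2) = α ^ 2 * A / 2 := by
  have h2 : (Real.sqrt (1/2)) ^ 2 = (1/2 : ℝ) := Real.sq_sqrt (by norm_num)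
  -- the constant test function puts α²A/2 in the set
  have hmem : ∀ h : ℝ → ℝ, (∫ x in (-1:ℝ)..1, h x) = A →
      α ^ 2 * A / 2 ∈ {E : ℝ | ∃ ψ : ℝ → ℝ, ContDiff ℝ 1 ψ ∧
        (∫ x in (-1:ℝ)..1, (ψ x) ^ 2) = 1 ∧
        E = ∫ x in (-1:ℝ)..1, h x * ((deriv ψ x) ^ 2 + α ^ 2 * (ψ x) ^ 2)} := by
    intro h hint
    refine ⟨fun _ => Real.sqrt (1/2), contDiff_const, ?_, ?_⟩
    · rw [intervalIntegral.integral_const] ; rw [h2] ; norm_num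
    · have hcongr : (fun x => h x * ((deriv (fun _ : ℝ => Real.sqrt (1/2)) x) ^ 2
          + α ^ 2 * ((fun _ : ℝ => Real.sqrt (1/2)) x) ^ 2))
          = fun x => h x * (α ^ 2 / 2) := by
        funext x
        simp only [deriv_const', h2]
        ring
      show _ = ∫ x in (-1:ℝ)..1, (fun x => h x * ((deriv (fun _ : ℝ => Real.sqrt (1/2)) x) ^ 2
          + α ^ 2 * ((fun _ : ℝ => Real.sqrt (1/2)) x) ^ 2)) x
      rw [hcongr, intervalIntegral.integral_mul_const, hint]
      ring
  constructor
  · intro h hh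
    obtain ⟨hc, hnn, hint⟩ := hh
    apply csInf_le
    · refine ⟨0, ?_⟩
      rintro E ⟨ψ, hψ, hnorm, rfl⟩
      apply intervalIntegral.integral_nonneg (by norm_num)
      intro x hx
      have := hnn x hx
      positivity
    · exact hmem h hint
  · apply le_antisymm
    · apply csInf_le
      · refine ⟨α ^ 2 * A / 2, ?_⟩
        rintro E ⟨ψ, hψ, hnorm, rfl⟩
        have hdc : Continuous (deriv ψ) := hψ.continuous_deriv le_rfl
        have hψc : Continuous ψ := hψ.continuous
        have hi1 : IntervalIntegrable (fun x => (deriv ψ x) ^ 2) MeasureTheory.volume (-1) 1 :=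
          (hdc.pow 2).intervalIntegrable _ _
        have hi2 : IntervalIntegrable (fun x => α ^ 2 * (ψ x) ^ 2) MeasureTheory.volume (-1) 1 :=
          (continuous_const.mul (hψc.pow 2)).intervalIntegrable _ _
        have hsplit : (∫ x in (-1:ℝ)..1, (A/2) * ((deriv ψ x) ^ 2 + α ^ 2 * (ψ x) ^ 2))
            = (A/2) * ((∫ x in (-1:ℝ)..1, (deriv ψ x) ^ 2)
              + α ^ 2 * (∫ x in (-1:ℝ)..1, (ψ x) ^ 2)) := by
          rw [intervalIntegral.integral_const_mul, intervalIntegral.integral_add hi1 hi2,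
            intervalIntegral.integral_const_mul]
        have hd2 : 0 ≤ ∫ x in (-1:ℝ)..1, (deriv ψ x) ^ 2 :=
          intervalIntegral.integral_nonneg (by norm_num) (fun x _ => sq_nonneg _)
        calc α ^ 2 * A / 2 = (A/2) * (0 + α ^ 2 * 1) := by ring
          _ ≤ (A/2) * ((∫ x in (-1:ℝ)..1, (deriv ψ x) ^ 2) + α ^ 2 * 1) := by
              apply mul_le_mul_of_nonneg_left _ (by linarith)
              linarith
          _ = ∫ x in (-1:ℝ)..1, (A/2) * ((deriv ψ x) ^ 2 + α ^ 2 * (ψ x) ^ 2) := by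
              rw [hsplit, hnorm]
      · exact hmem (fun _ => A/2) (by rw [intervalIntegral.integral_const]; norm_num; ring)
    · apply le_csInf
      · exact ⟨_, hmem (fun _ => A/2) (by rw [intervalIntegral.integral_const]; norm_num; ring)⟩
      · rintro E ⟨ψ, hψ, hnorm, rfl⟩
        have hdc : Continuous (deriv ψ) := hψ.continuous_deriv le_rfl
        have hψc : Continuous ψ := hψ.continuous
        have hi1 : IntervalIntegrable (fun x => (deriv ψ x) ^ 2) MeasureTheory.volume (-1) 1 :=
          (hdc.pow 2).intervalIntegrable _ _
        have hi2 : IntervalIntegrable (fun x => α ^ 2 * (ψ x) ^ 2) MeasureTheory.volume (-1) 1 :=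
          (continuous_const.mul (hψc.pow 2)).intervalIntegrable _ _
        have hsplit : (∫ x in (-1:ℝ)..1, (A/2) * ((deriv ψ x) ^ 2 + α ^ 2 * (ψ x) ^ 2))
            = (A/2) * ((∫ x in (-1:ℝ)..1, (deriv ψ x) ^ 2)
              + α ^ 2 * (∫ x in (-1:ℝ)..1, (ψ x) ^ 2)) := by
          rw [intervalIntegral.integral_const_mul, intervalIntegral.integral_add hi1 hi2,
            intervalIntegral.integral_const_mul]
        have hd2 : 0 ≤ ∫ x in (-1:ℝ)..1, (deriv ψ x) ^ 2 :=
          intervalIntegral.integral_nonneg (by norm_num) (fun x _ => sq_nonneg _)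
        calc α ^ 2 * A / 2 = (A/2) * (0 + α ^ 2 * 1) := by ring
          _ ≤ (A/2) * ((∫ x in (-1:ℝ)..1, (deriv ψ x) ^ 2) + α ^ 2 * 1) := by
              apply mul_le_mul_of_nonneg_left _ (by linarith)
              linarith
          _ = ∫ x in (-1:ℝ)..1, (A/2) * ((deriv ψ x) ^ 2 + α ^ 2 * (ψ x) ^ 2) := by
              rw [hsplit, hnorm]
end

section
/- Fix A > 0 and a Bond number B > 0, and set λ*₀ := (3A/2)·[1 − 3(√B − tanh(√B))/(B·tanh(√B))]^{−1}. Then for every h ∈ M_A, the squared fundamental shallow sloshing frequency with surface tension satisfies λ_{0,1}(h) := Ω_{0,1}(h)² ≤ λ*₀. -/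
set_option maxHeartbeats 1000000

lemma aux1 {x : ℝ} (hx : 0 < x) : Real.sinh x < x * Real.cosh x := by
  have h : StrictMonoOn (fun y : ℝ => y * Real.cosh y - Real.sinh y) (Set.Ici 0) := by
    apply strictMonoOn_of_deriv_pos (convex_Ici 0)
    · fun_prop
    · intro y hy
      rw [interior_Ici] at hy
      have hy' : 0 < y := hy
      have hd : HasDerivAt (fun y : ℝ => y * Real.cosh y - Real.sinh y)
          (1 * Real.cosh y + y * Real.sinh y - Real.cosh y) y :=
        ((hasDerivAt_id y).mul (Real.hasDerivAt_cosh y)).sub (Real.hasDerivAt_sinh y)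
      rw [hd.deriv]
      have := Real.sinh_pos_iff.mpr hy'
      nlinarith
  have := h (Set.self_mem_Ici) (Set.mem_Ici.mpr hx.le) hx
  simp at this
  linarith

lemma aux2 {x : ℝ} (hx : 0 < x) : 3 * x * Real.cosh x < (x ^ 2 + 3) * Real.sinh x := by
  have h : StrictMonoOn (fun y : ℝ => (y ^ 2 + 3) * Real.sinh y - 3 * y * Real.cosh y)
      (Set.Ici 0) := by
    apply strictMonoOn_of_deriv_pos (convex_Ici 0)
    · fun_prop
    · intro y hy
      rw [interior_Ici] at hy
      have hy' : 0 < y := hy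
      have hd : HasDerivAt (fun y : ℝ => (y ^ 2 + 3) * Real.sinh y - 3 * y * Real.cosh y)
          ((2 * y) * Real.sinh y + (y ^ 2 + 3) * Real.cosh y -
            ((3 * 1) * Real.cosh y + (3 * y) * Real.sinh y)) y := by
        have h1 : HasDerivAt (fun y : ℝ => y ^ 2 + 3) (2 * y) y := by
          simpa using (hasDerivAt_pow 2 y).add_const 3
        have h2 : HasDerivAt (fun y : ℝ => 3 * y) (3 * 1) y := (hasDerivAt_id y).const_mul 3
        exact (h1.mul (Real.hasDerivAt_sinh y)).sub (h2.mul (Real.hasDerivAt_cosh y))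
      rw [hd.deriv]
      have h1 := aux1 hy'
      have h2 := Real.cosh_pos (x := y)
      nlinarith [mul_pos hy' (sub_pos.mpr h1)]
  have := h (Set.self_mem_Ici) (Set.mem_Ici.mpr hx.le) hx
  simp at this
  linarith

/-- Admissible pairs `(ψ, ζ)` in `X_α`: `C¹` functions with `ζ(±1) = 0`, and
additionally `∫ ζ = 0` when `α = 0`. -/
def AdmissiblePair (α : ℝ) (ψ ζ : ℝ → ℝ) : Prop :=
  ContDiff ℝ 1 ψ ∧ ContDiff ℝ 1 ζ ∧ ζ (-1) = 0 ∧ ζ 1 = 0 ∧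
    (α = 0 → (∫ x in (-1 : ℝ)..1, ζ x) = 0)

/-- The energy `E_α(h; ψ, ζ)`. -/
noncomputable def energyC (B α : ℝ) (h ψ ζ : ℝ → ℝ) : ℝ :=
  (1 / 2) * (∫ x in (-1 : ℝ)..1, h x * ((deriv ψ x) ^ 2 + α ^ 2 * (ψ x) ^ 2)) +
    (1 / 2) * (∫ x in (-1 : ℝ)..1,
      ((1 + α ^ 2 / B) * (ζ x) ^ 2 + (1 / B) * (deriv ζ x) ^ 2))

/-- The fundamental shallow sloshing frequency
`Ω_{α,1}(h) = inf {E_α(h; ψ, ζ) : (ψ, ζ) ∈ X_α, G(ψ, ζ) = 1}`. -/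
noncomputable def Omega1 (B α : ℝ) (h : ℝ → ℝ) : ℝ :=
  sInf {E : ℝ | ∃ ψ ζ : ℝ → ℝ, AdmissiblePair α ψ ζ ∧
    (∫ x in (-1 : ℝ)..1, ψ x * ζ x) = 1 ∧ E = energyC B α h ψ ζ}

theorem isoperimetric_surface_tension_alpha_zero (A B : ℝ) (hA : 0 < A) (hB : 0 < B)
    (lam0 : ℝ)
    (hlam : lam0 = (3 * A / 2) * (1 - 3 * (Real.sqrt B - Real.tanh (Real.sqrt B)) /
      (B * Real.tanh (Real.sqrt B)))⁻¹) :
    ∀ h : ℝ → ℝ, MemMA A h → (Omega1 B 0 h) ^ 2 ≤ lam0 := by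
  intro h hh
  obtain ⟨hcont, hnn, hint⟩ := hh
  set s : ℝ := Real.sqrt B with hs_def
  have hs0 : 0 < s := Real.sqrt_pos.mpr hB
  have hB2 : s ^ 2 = B := Real.sq_sqrt hB.le
  set sh : ℝ := Real.sinh s with hsh_def
  set ch : ℝ := Real.cosh s with hch_def
  have hsh : 0 < sh := Real.sinh_pos_iff.mpr hs0
  have hch : 0 < ch := Real.cosh_pos s
  set K : ℝ := 1 - 3 * (s * ch - sh) / (s ^ 2 * sh) with hK_def
  have hNpos : 0 < (s ^ 2 + 3) * sh - 3 * s * ch := sub_pos.mpr (aux2 hs0)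
  have hKalt : K = ((s ^ 2 + 3) * sh - 3 * s * ch) / (s ^ 2 * sh) := by
    rw [hK_def]; field_simp; ring
  have hKpos : 0 < K := by
    rw [hKalt]; exact div_pos hNpos (by positivity)
  have htanh : Real.tanh s = sh / ch := Real.tanh_eq_sinh_div_cosh s
  have hlam' : lam0 = (3 * A / 2) * K⁻¹ := by
    rw [hlam]
    congr 2
    rw [htanh, ← hB2, hK_def]
    field_simp
  have hlam0pos : 0 < lam0 := by
    rw [hlam']; positivity
  have hlamK : lam0 * K = 3 * A / 2 := by
    rw [hlam', mul_assoc, inv_mul_cancel₀ hKpos.ne', mul_one]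
  set L : ℝ := Real.sqrt lam0 with hL_def
  have hLpos : 0 < L := Real.sqrt_pos.mpr hlam0pos
  have hL2 : L ^ 2 = lam0 := Real.sq_sqrt hlam0pos.le
  set b : ℝ := Real.sqrt (L / A) with hb_def
  set a : ℝ := Real.sqrt (L * lam0 / A) with ha_def
  have hb2 : b ^ 2 = L / A := Real.sq_sqrt (by positivity)
  have ha2 : a ^ 2 = L * lam0 / A := Real.sq_sqrt (by positivity)
  have hab : a * b = lam0 / A := by
    rw [ha_def, hb_def, ← Real.sqrt_mul (by positivity)]
    rw [show L * lam0 / A * (L / A) = (lam0 / A) ^ 2 by rw [← hL2]; ring]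
    exact Real.sqrt_sq (by positivity)
  set ψ : ℝ → ℝ := fun x => b * x with hψ_def
  set ζ : ℝ → ℝ := fun x => a * (x - Real.sinh (s * x) / sh) with hζ_def
  -- derivative facts
  have hlin : ∀ x : ℝ, HasDerivAt (fun x : ℝ => s * x) s x := fun x => by
    simpa using (hasDerivAt_id x).const_mul s
  have hsinh : ∀ x : ℝ, HasDerivAt (fun x : ℝ => Real.sinh (s * x)) (s * Real.cosh (s * x)) x := by
    intro x
    have := (Real.hasDerivAt_sinh (s * x)).comp x (hlin x)
    exact this.congr_deriv (mul_comm _ _)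
  have hcosh : ∀ x : ℝ, HasDerivAt (fun x : ℝ => Real.cosh (s * x)) (s * Real.sinh (s * x)) x := by
    intro x
    have := (Real.hasDerivAt_cosh (s * x)).comp x (hlin x)
    exact this.congr_deriv (mul_comm _ _)
  have hψd : ∀ x : ℝ, HasDerivAt ψ b x := fun x => by
    simpa using (hasDerivAt_id x).const_mul b
  have hζd : ∀ x : ℝ, HasDerivAt ζ (a * (1 - s * Real.cosh (s * x) / sh)) x := fun x =>
    (((hasDerivAt_id x).sub ((hsinh x).div_const sh)).const_mul a)
  have hζderiv : deriv ζ = fun x => a * (1 - s * Real.cosh (s * x) / sh) :=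
    funext fun x => (hζd x).deriv
  have hζcont : Continuous ζ :=
    continuous_const.mul (continuous_id.sub
      ((Real.continuous_sinh.comp (continuous_const.mul continuous_id)).div_const sh))
  -- ζ boundary values
  have hζ1 : ζ 1 = 0 := by
    rw [hζ_def]; simp [← hsh_def, div_self hsh.ne']
  have hζm1 : ζ (-1) = 0 := by
    rw [hζ_def]
    simp only [mul_neg_one, Real.sinh_neg, ← hsh_def]
    field_simp
    ring
  -- ∫ ζ = 0
  have hζint : (∫ x in (-1:ℝ)..1, ζ x) = 0 := by
    have hP : ∀ x ∈ Set.uIcc (-1:ℝ) 1,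
        HasDerivAt (fun x : ℝ => a * (x ^ 2 / 2 - Real.cosh (s * x) / (s * sh))) (ζ x) x := by
      intro x _
      have hd := (((hasDerivAt_pow 2 x).div_const 2).sub ((hcosh x).div_const (s * sh))).const_mul a
      refine hd.congr_deriv ?_
      rw [hζ_def]
      field_simp
      ring
    rw [intervalIntegral.integral_eq_sub_of_hasDerivAt hP (hζcont.intervalIntegrable _ _)]
    simp [Real.cosh_neg]
  -- G = 1
  have hG : (∫ x in (-1:ℝ)..1, ψ x * ζ x) = 1 := by
    have hP : ∀ x ∈ Set.uIcc (-1:ℝ) 1,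
        HasDerivAt (fun x : ℝ => a * b *
          (x ^ 3 / 3 - (x * Real.cosh (s * x) / s - Real.sinh (s * x) / s ^ 2) / sh))
          (ψ x * ζ x) x := by
      intro x _
      have hd1 : HasDerivAt (fun x : ℝ => x * Real.cosh (s * x) / s)
          ((1 * Real.cosh (s * x) + x * (s * Real.sinh (s * x))) / s) x :=
        ((hasDerivAt_id x).mul (hcosh x)).div_const s
      have hd := ((((hasDerivAt_pow 3 x).div_const 3).sub
        ((hd1.sub ((hsinh x).div_const (s ^ 2))).div_const sh)).const_mul (a * b))
      refine hd.congr_deriv ?_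
      rw [hψ_def, hζ_def]
      field_simp
      ring
    have hIcont : Continuous (fun x => ψ x * ζ x) := by
      rw [hψ_def]
      exact (continuous_const.mul continuous_id).mul hζcont
    rw [intervalIntegral.integral_eq_sub_of_hasDerivAt hP (hIcont.intervalIntegrable _ _)]
    simp only [mul_one, mul_neg_one, Real.cosh_neg, Real.sinh_neg, ← hsh_def, ← hch_def]
    have hval : a * b * ((1:ℝ) ^ 3 / 3 - (1 * ch / s - sh / s ^ 2) / sh) -
        a * b * ((-1:ℝ) ^ 3 / 3 - (-1 * ch / s - -sh / s ^ 2) / sh) =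
        a * b * (2 / 3 * K) := by
      rw [hK_def]; field_simp; ring
    rw [hval, hab]
    field_simp
    linear_combination 2 * hlamK
  -- energy = L
  have hE : energyC B 0 h ψ ζ = L := by
    have e1 : (∫ x in (-1:ℝ)..1, h x * ((deriv ψ x) ^ 2 + (0:ℝ) ^ 2 * (ψ x) ^ 2)) = L := by
      have : ∀ x ∈ Set.uIcc (-1:ℝ) 1,
          h x * ((deriv ψ x) ^ 2 + (0:ℝ) ^ 2 * (ψ x) ^ 2) = h x * b ^ 2 := by
        intro x _
        rw [(hψd x).deriv]; ring
      rw [intervalIntegral.integral_congr this, intervalIntegral.integral_mul_const, hint,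
        hb2]
      field_simp
    have e2 : (∫ x in (-1:ℝ)..1,
        ((1 + (0:ℝ) ^ 2 / B) * (ζ x) ^ 2 + (1 / B) * (deriv ζ x) ^ 2)) = L := by
      have hcg : ∀ x ∈ Set.uIcc (-1:ℝ) 1,
          (1 + (0:ℝ) ^ 2 / B) * (ζ x) ^ 2 + (1 / B) * (deriv ζ x) ^ 2 =
          (ζ x) ^ 2 + (1 / B) * (a * (1 - s * Real.cosh (s * x) / sh)) ^ 2 := by
        intro x _
        rw [(hζd x).deriv]; ring
      rw [intervalIntegral.integral_congr hcg]
      have hP : ∀ x ∈ Set.uIcc (-1:ℝ) 1,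
          HasDerivAt (fun x : ℝ => a ^ 2 *
            (x ^ 3 / 3 - 2 * (x * Real.cosh (s * x) / s - Real.sinh (s * x) / s ^ 2) / sh +
              Real.sinh (s * x) * Real.cosh (s * x) / (s * sh ^ 2) + x / s ^ 2 -
              2 * Real.sinh (s * x) / (s ^ 2 * sh)))
            ((ζ x) ^ 2 + (1 / B) * (a * (1 - s * Real.cosh (s * x) / sh)) ^ 2) x := by
        intro x _
        have hd1 : HasDerivAt (fun x : ℝ => x * Real.cosh (s * x) / s)
            ((1 * Real.cosh (s * x) + x * (s * Real.sinh (s * x))) / s) x :=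
          ((hasDerivAt_id x).mul (hcosh x)).div_const s
        have hd2 : HasDerivAt (fun x : ℝ => Real.sinh (s * x) * Real.cosh (s * x) / (s * sh ^ 2))
            ((s * Real.cosh (s * x) * Real.cosh (s * x) +
              Real.sinh (s * x) * (s * Real.sinh (s * x))) / (s * sh ^ 2)) x :=
          ((hsinh x).mul (hcosh x)).div_const (s * sh ^ 2)
        have hd : HasDerivAt (fun x : ℝ => a ^ 2 *
            (x ^ 3 / 3 - 2 * (x * Real.cosh (s * x) / s - Real.sinh (s * x) / s ^ 2) / sh +
              Real.sinh (s * x) * Real.cosh (s * x) / (s * sh ^ 2) + x / s ^ 2 -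
              2 * Real.sinh (s * x) / (s ^ 2 * sh)))
            (a ^ 2 * ((3 : ℕ) * x ^ 2 / 3 -
              2 * ((1 * Real.cosh (s * x) + x * (s * Real.sinh (s * x))) / s -
                s * Real.cosh (s * x) / s ^ 2) / sh +
              (s * Real.cosh (s * x) * Real.cosh (s * x) +
                Real.sinh (s * x) * (s * Real.sinh (s * x))) / (s * sh ^ 2) + 1 / s ^ 2 -
              2 * (s * Real.cosh (s * x)) / (s ^ 2 * sh))) x := by
          refine HasDerivAt.const_mul _ ?_
          refine ((((((hasDerivAt_pow 3 x).div_const 3).sub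
            (((hd1.sub ((hsinh x).div_const (s ^ 2))).const_mul 2).div_const sh)).add
            hd2).add ((hasDerivAt_id x).div_const (s ^ 2))).sub
            (((hsinh x).const_mul 2).div_const (s ^ 2 * sh)))
        convert hd using 1
        rw [hζ_def, ← hB2]
        push_cast
        field_simp
        ring
      have hIcont : Continuous (fun x : ℝ =>
          (ζ x) ^ 2 + (1 / B) * (a * (1 - s * Real.cosh (s * x) / sh)) ^ 2) := by
        have hc : Continuous (fun x : ℝ => a * (1 - s * Real.cosh (s * x) / sh)) :=
          continuous_const.mul (continuous_const.sub
            ((continuous_const.mul (Real.continuous_cosh.comp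
              (continuous_const.mul continuous_id))).div_const sh))
        exact (hζcont.pow 2).add (continuous_const.mul (hc.pow 2))
      rw [intervalIntegral.integral_eq_sub_of_hasDerivAt hP (hIcont.intervalIntegrable _ _)]
      simp only [mul_one, mul_neg_one, Real.cosh_neg, Real.sinh_neg, ← hsh_def, ← hch_def]
      have hval : a ^ 2 * ((1:ℝ) ^ 3 / 3 - 2 * (1 * ch / s - sh / s ^ 2) / sh +
            sh * ch / (s * sh ^ 2) + 1 / s ^ 2 - 2 * sh / (s ^ 2 * sh)) -
          a ^ 2 * ((-1:ℝ) ^ 3 / 3 - 2 * (-1 * ch / s - -sh / s ^ 2) / sh +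
            -sh * ch / (s * sh ^ 2) + (-1) / s ^ 2 - 2 * -sh / (s ^ 2 * sh)) =
          a ^ 2 * (2 / 3 * K) := by
        rw [hK_def]; field_simp; ring
      rw [hval, ha2]
      have : L * lam0 / A * (2 / 3 * K) = L * (lam0 * K * 2 / (3 * A)) := by ring
      rw [this, hlamK]
      field_simp
    rw [energyC, e1, e2]
    ring
  -- conclusion
  have hadm : AdmissiblePair 0 ψ ζ := by
    refine ⟨?_, ?_, hζm1, hζ1, fun _ => hζint⟩
    · exact contDiff_const.mul contDiff_id
    · exact contDiff_const.mul (contDiff_id.sub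
        ((Real.contDiff_sinh.comp (contDiff_const.mul contDiff_id)).div_const sh))
  have hmem : L ∈ {E : ℝ | ∃ ψ ζ : ℝ → ℝ, AdmissiblePair 0 ψ ζ ∧
      (∫ x in (-1 : ℝ)..1, ψ x * ζ x) = 1 ∧ E = energyC B 0 h ψ ζ} :=
    ⟨ψ, ζ, hadm, hG, hE.symm⟩
  have hlb : ∀ E ∈ {E : ℝ | ∃ ψ ζ : ℝ → ℝ, AdmissiblePair 0 ψ ζ ∧
      (∫ x in (-1 : ℝ)..1, ψ x * ζ x) = 1 ∧ E = energyC B 0 h ψ ζ}, (0:ℝ) ≤ E := by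
    rintro E ⟨ψ', ζ', -, -, rfl⟩
    rw [energyC]
    have i1 : (0:ℝ) ≤ ∫ x in (-1:ℝ)..1, h x * ((deriv ψ' x) ^ 2 + (0:ℝ) ^ 2 * (ψ' x) ^ 2) := by
      apply intervalIntegral.integral_nonneg (by norm_num)
      intro u hu
      have := hnn u hu
      positivity
    have i2 : (0:ℝ) ≤ ∫ x in (-1:ℝ)..1,
        ((1 + (0:ℝ) ^ 2 / B) * (ζ' x) ^ 2 + (1 / B) * (deriv ζ' x) ^ 2) := by
      apply intervalIntegral.integral_nonneg (by norm_num)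
      intro u _
      positivity
    exact add_nonneg (mul_nonneg (by norm_num) i1) (mul_nonneg (by norm_num) i2)
  have h1 : Omega1 B 0 h ≤ L := csInf_le ⟨0, hlb⟩ hmem
  have h0 : 0 ≤ Omega1 B 0 h := le_csInf ⟨L, hmem⟩ hlb
  calc (Omega1 B 0 h) ^ 2 ≤ L ^ 2 := pow_le_pow_left₀ h0 h1 2
    _ = lam0 := hL2
end

section
/- Fix A > 0 and a Bond number B > 0, set λ*₀ := (3A/2)·[1 − 3(√B − tanh(√B))/(B·tanh(√B))]^{−1}, and define h₀*(x) := (λ*₀/2)(1 − x²) − (λ*₀/(√B·sinh(√B)))·[cosh(√B) − cosh(√B·x)] for x ∈ [−1,1]. Then: h₀* is even, h₀*(±1) = 0, h₀* is strictly decreasing on (0,1), h₀*(x) > 0 for all x ∈ (−1,1), ∫_{−1}^{1} h₀*(x) dx = A (so h₀* ∈ M_A), and the function −h₀* is not convex on [−1,1]. -/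
lemma auxA {s : ℝ} (hs : 0 < s) : Real.sinh s < s * Real.cosh s := by
  have hmono : StrictMonoOn (fun t : ℝ => t * Real.cosh t - Real.sinh t) (Set.Ici 0) := by
    apply strictMonoOn_of_deriv_pos (convex_Ici 0)
    · fun_prop
    · intro t ht
      rw [interior_Ici] at ht
      have h1 : HasDerivAt (fun t : ℝ => t * Real.cosh t - Real.sinh t)
          (1 * Real.cosh t + t * Real.sinh t - Real.cosh t) t :=
        ((hasDerivAt_id t).mul (Real.hasDerivAt_cosh t)).sub (Real.hasDerivAt_sinh t)
      rw [h1.deriv]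
      have h2 : (0:ℝ) < t := ht
      nlinarith [mul_pos h2 (Real.sinh_pos_iff.2 h2)]
  have := hmono (Set.self_mem_Ici) (Set.mem_Ici.2 hs.le) hs
  simpa using this

lemma auxB {s : ℝ} (hs : 0 < s) : 3 * (s * Real.cosh s - Real.sinh s) < s ^ 2 * Real.sinh s := by
  have hmono : StrictMonoOn (fun t : ℝ => t ^ 2 * Real.sinh t - 3 * (t * Real.cosh t - Real.sinh t))
      (Set.Ici 0) := by
    apply strictMonoOn_of_deriv_pos (convex_Ici 0)
    · fun_prop
    · intro t ht
      rw [interior_Ici] at ht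
      have h1 : HasDerivAt (fun t : ℝ => t ^ 2 * Real.sinh t - 3 * (t * Real.cosh t - Real.sinh t))
          ((2 * t ^ 1) * Real.sinh t + t ^ 2 * Real.cosh t -
            3 * ((1 * Real.cosh t + t * Real.sinh t) - Real.cosh t)) t := by
        exact ((hasDerivAt_pow 2 t).mul (Real.hasDerivAt_sinh t)).sub
          ((((hasDerivAt_id t).mul (Real.hasDerivAt_cosh t)).sub (Real.hasDerivAt_sinh t)).const_mul 3)
      rw [h1.deriv]
      have h2 := auxA ht
      have h3 := Real.cosh_pos (x := t)
      have ht' : (0:ℝ) < t := ht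
      nlinarith [mul_pos ht' (sub_pos.2 h2)]
  have := hmono (Set.self_mem_Ici) (Set.mem_Ici.2 hs.le) hs
  simp only [Real.sinh_zero, Real.cosh_zero] at this
  nlinarith [this]

lemma auxC {s x : ℝ} (hs : 0 < s) (hx0 : 0 < x) (hx1 : x < 1) :
    Real.sinh (s * x) < x * Real.sinh s := by
  have hconv : StrictConvexOn ℝ (Set.Ici 0) Real.sinh := by
    apply strictConvexOn_of_deriv2_pos (convex_Ici 0) Real.continuous_sinh.continuousOn
    intro t ht
    rw [interior_Ici] at ht
    have : (deriv^[2] Real.sinh) = Real.sinh := by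
      ext y
      simp [Function.iterate_succ, Real.deriv_sinh, Real.deriv_cosh]
    rw [this]
    exact Real.sinh_pos_iff.2 ht
  have key := hconv.2 (Set.self_mem_Ici) (Set.mem_Ici.2 hs.le) hs.ne
    (by linarith) hx0 (by ring : (1 - x) + x = 1)
  simp only [smul_eq_mul, mul_zero, Real.sinh_zero, zero_add] at key
  rw [mul_comm s x]; exact key

theorem optimal_shape_alpha_zero (A B : ℝ) (hA : 0 < A) (hB : 0 < B)
    (lam0 : ℝ)
    (hlam : lam0 = (3 * A / 2) * (1 - 3 * (Real.sqrt B - Real.tanh (Real.sqrt B)) /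
      (B * Real.tanh (Real.sqrt B)))⁻¹)
    (h0 : ℝ → ℝ)
    (hh0 : ∀ x : ℝ, h0 x = lam0 / 2 * (1 - x ^ 2) -
      lam0 / (Real.sqrt B * Real.sinh (Real.sqrt B)) *
        (Real.cosh (Real.sqrt B) - Real.cosh (Real.sqrt B * x))) :
    (∀ x : ℝ, h0 (-x) = h0 x) ∧
    h0 (-1) = 0 ∧ h0 1 = 0 ∧
    StrictAntiOn h0 (Set.Ioo 0 1) ∧
    (∀ x ∈ Set.Ioo (-1 : ℝ) 1, 0 < h0 x) ∧
    (∫ x in (-1 : ℝ)..1, h0 x) = A ∧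
    ¬ ConvexOn ℝ (Set.Icc (-1 : ℝ) 1) (fun x => -h0 x) := by
  set s := Real.sqrt B with hsdef
  have hs : 0 < s := Real.sqrt_pos.2 hB
  have hs2 : s ^ 2 = B := Real.sq_sqrt hB.le
  have hsh : 0 < Real.sinh s := Real.sinh_pos_iff.2 hs
  have hch : 0 < Real.cosh s := Real.cosh_pos s
  have hth : Real.tanh s = Real.sinh s / Real.cosh s := Real.tanh_eq_sinh_div_cosh s
  -- the key constant
  have hKeq : (1 : ℝ) - 3 * (s - Real.tanh s) / (B * Real.tanh s) =
      (s ^ 2 * Real.sinh s - 3 * (s * Real.cosh s - Real.sinh s)) / (s ^ 2 * Real.sinh s) := by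
    rw [hth, ← hs2]
    field_simp
  have hEpos : 0 < (s ^ 2 * Real.sinh s - 3 * (s * Real.cosh s - Real.sinh s)) /
      (s ^ 2 * Real.sinh s) :=
    div_pos (by linarith [auxB hs]) (by positivity)
  have hKpos : 0 < (1 : ℝ) - 3 * (s - Real.tanh s) / (B * Real.tanh s) := by
    rw [hKeq]; exact hEpos
  have hlam0 : 0 < lam0 := by
    rw [hlam]
    exact mul_pos (by linarith) (inv_pos.2 hKpos)
  -- evenness
  have heven : ∀ x : ℝ, h0 (-x) = h0 x := by
    intro x
    rw [hh0, hh0, neg_sq, mul_neg, Real.cosh_neg]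
  -- boundary values
  have hval1 : h0 1 = 0 := by
    rw [hh0]
    norm_num
  have hvalm1 : h0 (-1) = 0 := (heven 1).trans hval1
  -- derivative
  have hd : ∀ x : ℝ, HasDerivAt h0 (lam0 * (Real.sinh (s * x) / Real.sinh s - x)) x := by
    intro x
    have hx : HasDerivAt (fun y : ℝ => s * y) s x := by
      simpa using (hasDerivAt_id x).const_mul s
    have hcosh : HasDerivAt (fun y : ℝ => Real.cosh (s * y)) (Real.sinh (s * x) * s) x :=
      (Real.hasDerivAt_cosh (s * x)).comp x hx
    have hsq : HasDerivAt (fun y : ℝ => 1 - y ^ 2) (-(2 * x)) x := by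
      simpa using (hasDerivAt_pow 2 x).const_sub 1
    have hbig : HasDerivAt
        (fun y => lam0 / 2 * (1 - y ^ 2) -
          lam0 / (s * Real.sinh s) * (Real.cosh s - Real.cosh (s * y)))
        (lam0 / 2 * (-(2 * x)) - lam0 / (s * Real.sinh s) * (-(Real.sinh (s * x) * s))) x :=
      (hsq.const_mul _).sub ((hcosh.const_sub _).const_mul _)
    have hfe : h0 = fun y => lam0 / 2 * (1 - y ^ 2) -
        lam0 / (s * Real.sinh s) * (Real.cosh s - Real.cosh (s * y)) := funext hh0
    rw [hfe]
    convert hbig using 1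
    field_simp
    ring
  have hcont : Continuous h0 := by
    have hfe : h0 = fun y => lam0 / 2 * (1 - y ^ 2) -
        lam0 / (s * Real.sinh s) * (Real.cosh s - Real.cosh (s * y)) := funext hh0
    rw [hfe]
    fun_prop
  -- strict anti on [0,1]
  have hanti : StrictAntiOn h0 (Set.Icc (0:ℝ) 1) := by
    apply strictAntiOn_of_deriv_neg (convex_Icc 0 1) hcont.continuousOn
    intro x hx
    rw [interior_Icc] at hx
    rw [(hd x).deriv]
    have hsx := auxC hs hx.1 hx.2
    have hlt : Real.sinh (s * x) / Real.sinh s < x := (div_lt_iff₀ hsh).2 (by linarith)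
    exact mul_neg_of_pos_of_neg hlam0 (by linarith)
  -- positivity
  have hpos : ∀ x ∈ Set.Ioo (-1 : ℝ) 1, 0 < h0 x := by
    intro x hx
    rcases le_or_gt 0 x with h | h
    · have := hanti ⟨h, hx.2.le⟩ ⟨zero_le_one, le_refl 1⟩ hx.2
      rwa [hval1] at this
    · have := hanti ⟨by linarith [hx.1], by linarith [hx.1]⟩ ⟨zero_le_one, le_refl 1⟩
        (by linarith [hx.1] : -x < 1)
      rwa [hval1, heven] at this
  refine ⟨heven, hvalm1, hval1, hanti.mono Set.Ioo_subset_Icc_self, hpos, ?_, ?_⟩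
  · -- integral
    have hHd : ∀ x ∈ Set.uIcc (-1 : ℝ) 1, HasDerivAt
        (fun y : ℝ => lam0 / 2 * (y - y ^ 3 / 3) -
          lam0 / (s * Real.sinh s) * (Real.cosh s * y - Real.sinh (s * y) / s)) (h0 x) x := by
      intro x _
      have hx : HasDerivAt (fun y : ℝ => s * y) s x := by
        simpa using (hasDerivAt_id x).const_mul s
      have hsinh : HasDerivAt (fun y : ℝ => Real.sinh (s * y)) (Real.cosh (s * x) * s) x :=
        (Real.hasDerivAt_sinh (s * x)).comp x hx
      have h1 : HasDerivAt (fun y : ℝ => y - y ^ 3 / 3) (1 - 3 * x ^ 2 / 3) x := by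
        exact ((hasDerivAt_id' x).sub ((hasDerivAt_pow 3 x).div_const 3)).congr_deriv (by norm_num)
      have h2 : HasDerivAt (fun y : ℝ => Real.cosh s * y - Real.sinh (s * y) / s)
          (Real.cosh s * 1 - Real.cosh (s * x) * s / s) x := by
        exact (((hasDerivAt_id x).const_mul (Real.cosh s)).sub (hsinh.div_const s))
      have hbig := (h1.const_mul (lam0 / 2)).sub (h2.const_mul (lam0 / (s * Real.sinh s)))
      refine hbig.congr_deriv ?_
      rw [hh0]
      field_simp
    have hint := intervalIntegral.integral_eq_sub_of_hasDerivAt hHd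
      (hcont.intervalIntegrable (-1) 1)
    have hE0 : (s ^ 2 * Real.sinh s - 3 * (s * Real.cosh s - Real.sinh s)) /
        (s ^ 2 * Real.sinh s) ≠ 0 := ne_of_gt hEpos
    have e2 : lam0 / 2 * (1 - 1 ^ 3 / 3) -
        lam0 / (s * Real.sinh s) * (Real.cosh s * 1 - Real.sinh (s * 1) / s) -
        (lam0 / 2 * (-1 - (-1) ^ 3 / 3) -
          lam0 / (s * Real.sinh s) * (Real.cosh s * -1 - Real.sinh (s * -1) / s)) =
        lam0 * ((s ^ 2 * Real.sinh s - 3 * (s * Real.cosh s - Real.sinh s)) /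
          (s ^ 2 * Real.sinh s)) * (2 / 3) := by
      simp only [mul_one, mul_neg_one, Real.sinh_neg]
      field_simp
      ring
    have e3 : ∀ E : ℝ, E ≠ 0 → 3 * A / 2 * E⁻¹ * E * (2 / 3) = A := by
      intro E hE
      field_simp
    rw [hint, e2, hlam, hKeq]
    exact e3 _ hE0
  · -- non-convexity
    intro hc
    have h00 : 0 < h0 0 := hpos 0 (by norm_num)
    have hder1 : HasDerivAt h0 0 1 := by
      have := hd 1
      rwa [mul_one, div_self hsh.ne', sub_self, mul_zero] at this
    have hslope : Filter.Tendsto (slope h0 1) (nhdsWithin 1 (Set.Iio 1)) (nhds 0) := by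
      have := hasDerivAt_iff_tendsto_slope.1 hder1
      exact this.mono_left (nhdsWithin_mono 1 (fun y hy => ne_of_lt hy))
    have hF : Filter.Tendsto (fun y : ℝ => (h0 0 - h0 y) / y) (nhdsWithin 1 (Set.Iio 1))
        (nhds (h0 0)) := by
      have hc1 : ContinuousAt (fun y : ℝ => (h0 0 - h0 y) / y) 1 :=
        (continuousAt_const.sub hcont.continuousAt).div continuousAt_id (by norm_num)
      have h2 := hc1.tendsto
      simp only [hval1, sub_zero, div_one] at h2
      exact h2.mono_left nhdsWithin_le_nhds
    have hle : ∀ᶠ y in nhdsWithin 1 (Set.Iio 1),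
        (h0 0 - h0 y) / y ≤ -(slope h0 1 y) := by
      filter_upwards [Ioo_mem_nhdsLT_of_mem (show (1:ℝ) ∈ Set.Ioc 0 1 by norm_num)] with y hy
      have hcs := hc.slope_mono_adjacent (show (0:ℝ) ∈ Set.Icc (-1:ℝ) 1 by norm_num)
        (show (1:ℝ) ∈ Set.Icc (-1:ℝ) 1 by norm_num) hy.1 hy.2
      have hcs' : (-h0 y - -h0 0) / (y - 0) ≤ (-h0 1 - -h0 y) / (1 - y) := hcs
      have e6 : (-h0 y - -h0 0) / (y - 0) = (h0 0 - h0 y) / y := by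
        rw [sub_zero]; ring
      have e7 : (-h0 1 - -h0 y) / (1 - y) = h0 y / (1 - y) := by
        rw [hval1]; ring
      rw [e6, e7] at hcs'
      rw [slope_def_field, hval1]
      have e1 : -((h0 y - 0) / (y - 1)) = h0 y / (1 - y) := by
        rw [sub_zero, ← div_neg, neg_sub]
      rw [e1]
      exact hcs'
    have hfin := le_of_tendsto_of_tendsto hF hslope.neg hle
    simp only [neg_zero] at hfin
    linarith
end

section
/- Fix A > 0, a wavenumber α > 0, and a Bond number B > 0. Set κ_α := √(α² + B) and λ*_α := (α²A/2)·(κ_α²/B)·[1 − tanh(κ_α)/κ_α]^{−1}. Then for every h ∈ M_A, the squared fundamental shallow sloshing frequency with surface tension satisfies λ_{α,1}(h) := Ω_{α,1}(h)² ≤ λ*_α. -/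
private lemma int_cosh_aux (m : ℝ) (hm : m ≠ 0) :
    ∫ x in (-1:ℝ)..1, Real.cosh (m * x) = 2 * Real.sinh m / m := by
  rw [intervalIntegral.integral_comp_mul_left (fun y => Real.cosh y) hm]
  rw [intervalIntegral.integral_eq_sub_of_hasDerivAt (fun x _ => Real.hasDerivAt_sinh x)
    (Real.continuous_cosh.intervalIntegrable _ _)]
  rw [mul_one, mul_neg_one, Real.sinh_neg]
  field_simp
  ring_nf; rw [mul_comm m]; simp [hm]

private lemma tanh_lt_self_aux (k : ℝ) (hk : 0 < k) : Real.tanh k < k := by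
  obtain ⟨c, hc, hceq⟩ := exists_hasDerivAt_eq_slope Real.sinh Real.cosh hk
    (Real.continuous_sinh.continuousOn) (fun x _ => Real.hasDerivAt_sinh x)
  have hck : Real.cosh c < Real.cosh k := by
    rw [Real.cosh_lt_cosh, abs_of_pos hc.1, abs_of_pos hk]
    exact hc.2
  have h1 : Real.sinh k = Real.cosh c * k := by
    rw [hceq]; field_simp
    rw [Real.sinh_zero, sub_zero, sub_zero, mul_div_cancel_right₀ _ hk.ne']
  rw [Real.tanh_eq_sinh_div_cosh, div_lt_iff₀ (Real.cosh_pos k), h1]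
  nlinarith [Real.cosh_pos k]

theorem isoperimetric_surface_tension_alpha_pos (A α B : ℝ) (hA : 0 < A)
    (hα : 0 < α) (hB : 0 < B)
    (κα : ℝ) (hκ : κα = Real.sqrt (α ^ 2 + B))
    (lamα : ℝ)
    (hlam : lamα = (α ^ 2 * A / 2) * (κα ^ 2 / B) * (1 - Real.tanh κα / κα)⁻¹) :
    ∀ h : ℝ → ℝ, MemMA A h → (Omega1 B α h) ^ 2 ≤ lamα := by
  intro h hh
  obtain ⟨hcont, hnn, hint⟩ := hh
  have hkpos : 0 < κα := by
    rw [hκ]; exact Real.sqrt_pos.mpr (by positivity)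
  have hk2 : κα ^ 2 = α ^ 2 + B := by
    rw [hκ]; exact Real.sq_sqrt (by positivity)
  have hC := Real.cosh_pos κα
  set C := Real.cosh κα with hCdef
  set D := (1 : ℝ) - Real.tanh κα / κα with hDdef
  have hDpos : 0 < D := by
    have h1 := tanh_lt_self_aux κα hkpos
    have h2 : Real.tanh κα / κα < 1 := (div_lt_one hkpos).mpr h1
    rw [hDdef]
    linarith
  have hDval : D = 1 - Real.sinh κα / (C * κα) := by
    rw [hDdef, Real.tanh_eq_sinh_div_cosh, div_div]
  have hlampos : 0 < lamα := by rw [hlam]; positivity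
  set S := Real.sqrt lamα with hSdef
  have hS2 : S ^ 2 = lamα := Real.sq_sqrt hlampos.le
  have hSpos : 0 < S := Real.sqrt_pos.mpr hlampos
  set c := Real.sqrt (S / (α ^ 2 * A)) with hcdef
  have hcpos : 0 < c := Real.sqrt_pos.mpr (by positivity)
  have hc2 : c ^ 2 = S / (α ^ 2 * A) := Real.sq_sqrt (by positivity)
  set t := 1 / (2 * c * D) with htdef
  set ψ : ℝ → ℝ := fun _ => c with hψdef
  set ζ : ℝ → ℝ := fun x => t * (1 - Real.cosh (κα * x) / C) with hζdef
  -- derivative of ζ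
  have hζd : ∀ x, HasDerivAt ζ (-(t * κα / C) * Real.sinh (κα * x)) x := by
    intro x
    have h1 : HasDerivAt (fun x : ℝ => κα * x) κα x := by
      simpa using (hasDerivAt_id x).const_mul κα
    have h3 := ((h1.cosh.div_const C).const_sub 1).const_mul t
    rw [hζdef]
    exact h3.congr_deriv (by ring)
  have hζderiv : ∀ x, deriv ζ x = -(t * κα / C) * Real.sinh (κα * x) :=
    fun x => (hζd x).deriv
  -- admissibility
  have hζcd : ContDiff ℝ 1 ζ := by
    rw [hζdef]
    exact contDiff_const.mul (contDiff_const.sub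
      ((Real.contDiff_cosh.comp (contDiff_const.mul contDiff_id)).div_const _))
  have hζm1 : ζ (-1) = 0 := by
    rw [hζdef]
    simp only [mul_neg_one, Real.cosh_neg, ← hCdef, div_self hC.ne']
    ring
  have hζp1 : ζ 1 = 0 := by
    rw [hζdef]
    simp only [mul_one, ← hCdef, div_self hC.ne']
    ring
  -- basic integrals
  have hIcosh : ∫ x in (-1:ℝ)..1, Real.cosh (κα * x) = 2 * Real.sinh κα / κα :=
    int_cosh_aux κα hkpos.ne'
  have hIcosh2 : ∫ x in (-1:ℝ)..1, Real.cosh (2 * κα * x)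
      = 2 * Real.sinh (2 * κα) / (2 * κα) :=
    int_cosh_aux (2 * κα) (by positivity)
  have contcosh : Continuous fun x : ℝ => Real.cosh (κα * x) :=
    Real.continuous_cosh.comp (continuous_const.mul continuous_id)
  have contcosh2 : Continuous fun x : ℝ => Real.cosh (2 * κα * x) :=
    Real.continuous_cosh.comp (continuous_const.mul continuous_id)
  -- the constraint integral
  have hG : (∫ x in (-1:ℝ)..1, ψ x * ζ x) = 1 := by
    have e : Set.EqOn (fun x => ψ x * ζ x)
        (fun x => c * t - (c * t / C) * Real.cosh (κα * x)) (Set.uIcc (-1:ℝ) 1) := by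
      intro x _
      simp only [hψdef, hζdef]
      field_simp
      try ring
    rw [intervalIntegral.integral_congr e,
      intervalIntegral.integral_sub (g := fun x => c * t / C * Real.cosh (κα * x)) (intervalIntegrable_const)
        ((continuous_const.mul contcosh).intervalIntegrable _ _),
      intervalIntegral.integral_const, intervalIntegral.integral_const_mul, hIcosh]
    have key : 2 * c * t * D = 1 := by
      rw [htdef]; field_simp
    calc (1 - (-1) : ℝ) • (c * t) - c * t / C * (2 * Real.sinh κα / κα)
        = 2 * c * t * (1 - Real.sinh κα / (C * κα)) := by
          rw [smul_eq_mul]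
          field_simp [hC.ne', hkpos.ne']
          try ring
      _ = 2 * c * t * D := by rw [← hDval]
      _ = 1 := key
  -- the two energy integrals
  have hI1 : (∫ x in (-1:ℝ)..1, h x * ((deriv ψ x) ^ 2 + α ^ 2 * (ψ x) ^ 2))
      = α ^ 2 * c ^ 2 * A := by
    have e : Set.EqOn (fun x => h x * ((deriv ψ x) ^ 2 + α ^ 2 * (ψ x) ^ 2))
        (fun x => (α ^ 2 * c ^ 2) * h x) (Set.uIcc (-1:ℝ) 1) := by
      intro x _
      simp only [hψdef, deriv_const']
      ring
    rw [intervalIntegral.integral_congr e, intervalIntegral.integral_const_mul, hint]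
    try ring
  have hI2 : (∫ x in (-1:ℝ)..1, ((1 + α ^ 2 / B) * (ζ x) ^ 2 + (1 / B) * (deriv ζ x) ^ 2))
      = (t ^ 2 * κα ^ 2 / B) * (2 * D) := by
    have e : Set.EqOn (fun x => (1 + α ^ 2 / B) * (ζ x) ^ 2 + (1 / B) * (deriv ζ x) ^ 2)
        (fun x => (t ^ 2 * κα ^ 2 / B - (2 * t ^ 2 * κα ^ 2 / (B * C)) * Real.cosh (κα * x))
          + (t ^ 2 * κα ^ 2 / (B * C ^ 2)) * Real.cosh (2 * κα * x)) (Set.uIcc (-1:ℝ) 1) := by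
      intro x _
      simp only [hζdef]
      rw [hζderiv x, mul_assoc 2 κα x, Real.cosh_two_mul]
      have hB' : (1 : ℝ) + α ^ 2 / B = κα ^ 2 / B := by
        rw [hk2]; field_simp; try ring
      rw [hB']
      field_simp
      ring
    rw [intervalIntegral.integral_congr e,
      intervalIntegral.integral_add
        (f := fun x => t ^ 2 * κα ^ 2 / B - (2 * t ^ 2 * κα ^ 2 / (B * C)) * Real.cosh (κα * x))
        (g := fun x => (t ^ 2 * κα ^ 2 / (B * C ^ 2)) * Real.cosh (2 * κα * x))
        ((intervalIntegrable_const).sub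
          ((continuous_const.mul contcosh).intervalIntegrable _ _))
        ((continuous_const.mul contcosh2).intervalIntegrable _ _),
      intervalIntegral.integral_sub (g := fun x => (2 * t ^ 2 * κα ^ 2 / (B * C)) * Real.cosh (κα * x)) (intervalIntegrable_const)
        ((continuous_const.mul contcosh).intervalIntegrable _ _),
      intervalIntegral.integral_const, intervalIntegral.integral_const_mul,
      intervalIntegral.integral_const_mul, hIcosh, hIcosh2, Real.sinh_two_mul, ← hCdef]
    rw [hDval, smul_eq_mul]
    field_simp [hC.ne', hkpos.ne', hB.ne']
    ring
  -- total energy equals S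
  have hαAk : α ^ 2 * A * κα ^ 2 = 2 * B * D * lamα := by
    rw [hlam]
    field_simp [hDpos.ne', hB.ne']
    try ring
  have hE : energyC B α h ψ ζ = S := by
    rw [energyC, hI1, hI2]
    have e1 : (1 / 2 : ℝ) * (α ^ 2 * c ^ 2 * A) = S / 2 := by
      rw [hc2]
      field_simp [hα.ne', hA.ne']
      try ring
    have e2 : (1 / 2 : ℝ) * ((t ^ 2 * κα ^ 2 / B) * (2 * D)) = S / 2 := by
      calc (1 / 2 : ℝ) * ((t ^ 2 * κα ^ 2 / B) * (2 * D))
          = κα ^ 2 / (4 * c ^ 2 * D * B) := by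
            rw [htdef]
            field_simp [hcpos.ne', hDpos.ne', hB.ne']
            ring
        _ = (α ^ 2 * A * κα ^ 2) / (4 * S * D * B) := by
            rw [hc2]
            field_simp [hα.ne', hA.ne', hSpos.ne', hDpos.ne', hB.ne']
        _ = (2 * B * D * lamα) / (4 * S * D * B) := by rw [hαAk]
        _ = lamα / (2 * S) := by
            field_simp [hDpos.ne', hB.ne', hSpos.ne']
            ring
        _ = S / 2 := by
            rw [← hS2]
            field_simp [hSpos.ne']
    linarith [e1, e2]
  -- conclude via the infimum
  have hbdd : ∀ E ∈ {E : ℝ | ∃ ψ ζ : ℝ → ℝ, AdmissiblePair α ψ ζ ∧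
      (∫ x in (-1 : ℝ)..1, ψ x * ζ x) = 1 ∧ E = energyC B α h ψ ζ}, 0 ≤ E := by
    rintro E ⟨ψ', ζ', _, _, rfl⟩
    rw [energyC]
    have i1 : 0 ≤ ∫ x in (-1:ℝ)..1, h x * ((deriv ψ' x) ^ 2 + α ^ 2 * (ψ' x) ^ 2) := by
      apply intervalIntegral.integral_nonneg (by norm_num)
      intro u hu
      have := hnn u hu
      positivity
    have i2 : 0 ≤ ∫ x in (-1:ℝ)..1,
        ((1 + α ^ 2 / B) * (ζ' x) ^ 2 + (1 / B) * (deriv ζ' x) ^ 2) := by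
      apply intervalIntegral.integral_nonneg (by norm_num)
      intro u _
      positivity
    positivity
  have hmem : S ∈ {E : ℝ | ∃ ψ ζ : ℝ → ℝ, AdmissiblePair α ψ ζ ∧
      (∫ x in (-1 : ℝ)..1, ψ x * ζ x) = 1 ∧ E = energyC B α h ψ ζ} :=
    ⟨ψ, ζ, ⟨contDiff_const, hζcd, hζm1, hζp1, fun h0 => absurd h0 hα.ne'⟩, hG, hE.symm⟩
  have hle : Omega1 B α h ≤ S := csInf_le ⟨0, fun E hE => hbdd E hE⟩ hmem
  have h0 : 0 ≤ Omega1 B α h := Real.sInf_nonneg hbdd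
  calc (Omega1 B α h) ^ 2 ≤ S ^ 2 := pow_le_pow_left₀ h0 hle 2
    _ = lamα := hS2
end

section
/- Fix A > 0, a wavenumber α > 0, and a Bond number B > 0. Set κ_α := √(α² + B), λ*_α := (α²A/2)·(κ_α²/B)·[1 − tanh(κ_α)/κ_α]^{−1}, and define h_α*(x) := (λ*_α·B/(α²κ_α²))·[1 − cosh(κ_α x)/cosh(κ_α)] for x ∈ [−1,1]. Then: h_α* is even, h_α*(±1) = 0, h_α*(x) > 0 for all x ∈ (−1,1), h_α* is strictly decreasing on (0,1), ∫_{−1}^{1} h_α*(x) dx = A (so h_α* ∈ M_A), and the function −h_α* is convex on [−1,1]. -/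
open Real

lemma tanh_lt_self_aux_s4 {x : ℝ} (hx : 0 < x) : Real.tanh x < x := by
  have hmono : StrictMonoOn (fun y : ℝ => y * Real.cosh y - Real.sinh y) (Set.Ici 0) := by
    apply strictMonoOn_of_deriv_pos (convex_Ici 0)
    · exact ((continuous_id.mul Real.continuous_cosh).sub Real.continuous_sinh).continuousOn
    · intro y hy
      rw [interior_Ici, Set.mem_Ioi] at hy
      have h1 : HasDerivAt (fun y : ℝ => y * Real.cosh y - Real.sinh y)
          (1 * Real.cosh y + y * Real.sinh y - Real.cosh y) y :=
        ((hasDerivAt_id y).mul (Real.hasDerivAt_cosh y)).sub (Real.hasDerivAt_sinh y)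
      rw [h1.deriv]
      have : 0 < y * Real.sinh y := mul_pos hy (by rwa [Real.sinh_pos_iff])
      nlinarith
  have h0 : (0 : ℝ) * Real.cosh 0 - Real.sinh 0 < x * Real.cosh x - Real.sinh x :=
    hmono (Set.self_mem_Ici) (Set.mem_Ici.mpr hx.le) hx
  simp only [Real.cosh_zero, Real.sinh_zero, zero_mul, sub_zero] at h0
  rw [Real.tanh_eq_sinh_div_cosh, div_lt_iff₀ (Real.cosh_pos _)]
  linarith

theorem optimal_shape_alpha_pos (A α B : ℝ) (hA : 0 < A) (hα : 0 < α) (hB : 0 < B)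
    (κα : ℝ) (hκ : κα = Real.sqrt (α ^ 2 + B))
    (lamα : ℝ)
    (hlam : lamα = (α ^ 2 * A / 2) * (κα ^ 2 / B) * (1 - Real.tanh κα / κα)⁻¹)
    (hα' : ℝ → ℝ)
    (hhα : ∀ x : ℝ, hα' x = lamα * B / (α ^ 2 * κα ^ 2) *
      (1 - Real.cosh (κα * x) / Real.cosh κα)) :
    (∀ x : ℝ, hα' (-x) = hα' x) ∧
    hα' (-1) = 0 ∧ hα' 1 = 0 ∧
    (∀ x ∈ Set.Ioo (-1 : ℝ) 1, 0 < hα' x) ∧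
    StrictAntiOn hα' (Set.Ioo 0 1) ∧
    (∫ x in (-1 : ℝ)..1, hα' x) = A ∧
    ConvexOn ℝ (Set.Icc (-1 : ℝ) 1) (fun x => -hα' x) := by
  have hκpos : 0 < κα := by
    rw [hκ]; exact Real.sqrt_pos.mpr (by positivity)
  have hκne : κα ≠ 0 := hκpos.ne'
  have hcoshpos : 0 < Real.cosh κα := Real.cosh_pos κα
  have hcont : Continuous fun x => Real.cosh (κα * x) :=
    Real.continuous_cosh.comp (continuous_const.mul continuous_id)
  have hconts : Continuous fun x => Real.sinh (κα * x) :=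
    Real.continuous_sinh.comp (continuous_const.mul continuous_id)
  have hcoshne : Real.cosh κα ≠ 0 := hcoshpos.ne'
  have htanh : Real.tanh κα < κα := tanh_lt_self_aux_s4 hκpos
  have hD : 0 < 1 - Real.tanh κα / κα := by
    rw [sub_pos, div_lt_one hκpos]; exact htanh
  set C : ℝ := A / 2 * (1 - Real.tanh κα / κα)⁻¹ with hCdef
  have hCpos : 0 < C := by positivity
  have hCval : lamα * B / (α ^ 2 * κα ^ 2) = C := by
    have hsub : κα - Real.tanh κα ≠ 0 := by nlinarith
    rw [hlam, hCdef]
    field_simp [hsub]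
  have hfun : hα' = fun x => C * (1 - Real.cosh (κα * x) / Real.cosh κα) := by
    funext x; rw [hhα, hCval]
  rw [hfun]
  refine ⟨?_, ?_, ?_, ?_, ?_, ?_, ?_⟩
  · intro x; simp [mul_neg, Real.cosh_neg]
  · simp [mul_neg, Real.cosh_neg, div_self hcoshne]
  · simp [div_self hcoshne]
  · intro x hx
    apply mul_pos hCpos
    rw [sub_pos, div_lt_one hcoshpos, Real.cosh_lt_cosh, abs_mul, abs_of_pos hκpos]
    have hx1 : |x| < 1 := abs_lt.mpr ⟨hx.1, hx.2⟩
    have h0 : (0:ℝ) ≤ |x| := abs_nonneg x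
    nlinarith
  · intro x hx y hy hxy
    apply mul_lt_mul_of_pos_left _ hCpos
    apply sub_lt_sub_left
    gcongr
    rw [Real.cosh_lt_cosh, abs_of_pos (mul_pos hκpos hx.1), abs_of_pos (mul_pos hκpos hy.1)]
    exact mul_lt_mul_of_pos_left hxy hκpos
  · have hderiv : ∀ x ∈ Set.uIcc (-1 : ℝ) 1,
        HasDerivAt (fun x => C * (x - Real.sinh (κα * x) / (κα * Real.cosh κα)))
          (C * (1 - Real.cosh (κα * x) / Real.cosh κα)) x := by
      intro x _
      have hlin : HasDerivAt (fun x : ℝ => κα * x) κα x := by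
        simpa using (hasDerivAt_id x).const_mul κα
      have h1 : HasDerivAt (fun x => Real.sinh (κα * x)) (Real.cosh (κα * x) * κα) x :=
        (Real.hasDerivAt_sinh (κα * x)).comp x hlin
      have h2 := ((hasDerivAt_id x).sub
        (h1.div_const (κα * Real.cosh κα))).const_mul C
      refine h2.congr_deriv ?_
      field_simp
    have hint : IntervalIntegrable (fun x => C * (1 - Real.cosh (κα * x) / Real.cosh κα))
        MeasureTheory.volume (-1) 1 := by
      exact (continuous_const.mul (continuous_const.sub
        (hcont.div_const _))).intervalIntegrable _ _
    rw [intervalIntegral.integral_eq_sub_of_hasDerivAt hderiv hint]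
    have hsneg : Real.sinh (κα * (-1)) = -Real.sinh κα := by
      rw [mul_neg_one, Real.sinh_neg]
    have h1 : Real.sinh κα / (κα * Real.cosh κα) = Real.tanh κα / κα := by
      rw [Real.tanh_eq_sinh_div_cosh, div_div, mul_comm]
    have key : C * (1 - Real.tanh κα / κα) = A / 2 := by
      rw [hCdef, mul_assoc, inv_mul_cancel₀ hD.ne', mul_one]
    rw [hsneg, mul_one, neg_div, h1]
    linear_combination 2 * key
  · have heq : (fun x => -(C * (1 - Real.cosh (κα * x) / Real.cosh κα)))
        = fun x => C / Real.cosh κα * Real.cosh (κα * x) - C := by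
      funext x; field_simp; ring
    rw [heq]
    apply convexOn_of_hasDerivWithinAt2_nonneg (f' := fun x =>
        C / Real.cosh κα * (κα * Real.sinh (κα * x)))
      (f'' := fun x => C / Real.cosh κα * (κα ^ 2 * Real.cosh (κα * x))) (convex_Icc _ _)
    · exact ((continuous_const.mul hcont).sub continuous_const).continuousOn
    · intro x _
      have hlin : HasDerivAt (fun x : ℝ => κα * x) κα x := by
        simpa using (hasDerivAt_id x).const_mul κα
      have h1 : HasDerivAt (fun x => Real.cosh (κα * x)) (Real.sinh (κα * x) * κα) x :=
        (Real.hasDerivAt_cosh (κα * x)).comp x hlin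
      have h2 := (h1.const_mul (C / Real.cosh κα)).sub_const C
      refine (HasDerivAt.hasDerivWithinAt ?_)
      convert h2 using 1; ring
    · intro x _
      have hlin : HasDerivAt (fun x : ℝ => κα * x) κα x := by
        simpa using (hasDerivAt_id x).const_mul κα
      have h1 : HasDerivAt (fun x => Real.sinh (κα * x)) (Real.cosh (κα * x) * κα) x :=
        (Real.hasDerivAt_sinh (κα * x)).comp x hlin
      have h2 := (h1.const_mul κα).const_mul (C / Real.cosh κα)
      refine (HasDerivAt.hasDerivWithinAt ?_)
      refine h2.congr_deriv (by ring)
    · intro x _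
      have : 0 < Real.cosh (κα * x) := Real.cosh_pos _
      positivity
end

section
/- Fix A > 0, α ≥ 0, and a Bond number B > 0. If h₁ ∈ M_A is a maximizer of Ω_{α,1} over M_A (i.e. Ω_{α,1}(h₁) ≥ Ω_{α,1}(h) for all h ∈ M_A), then the symmetrization h₃ defined by h₃(x) := (h₁(x) + h₁(−x))/2 belongs to M_A, satisfies h₃(−x) = h₃(x) for all x ∈ [−1,1], and is also a maximizer of Ω_{α,1} over M_A. -/
private lemma uIccEq : Set.uIcc (-1 : ℝ) 1 = Set.Icc (-1 : ℝ) 1 :=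
  Set.uIcc_of_le (by norm_num)

private lemma int_comp_neg (f : ℝ → ℝ) :
    (∫ x in (-1 : ℝ)..1, f (-x)) = ∫ x in (-1 : ℝ)..1, f x := by
  simpa using intervalIntegral.integral_comp_neg (a := (-1 : ℝ)) (b := 1) f

private lemma refl_admissible {α : ℝ} {ψ ζ : ℝ → ℝ} (h : AdmissiblePair α ψ ζ) :
    AdmissiblePair α (fun x => ψ (-x)) (fun x => ζ (-x)) := by
  obtain ⟨hψ, hζ, hm, hp, hz⟩ := h
  have hneg : ContDiff ℝ 1 (fun x : ℝ => -x) := contDiff_id.neg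
  exact ⟨hψ.comp hneg, hζ.comp hneg, by simpa using hp, by simpa using hm,
    fun h0 => by rw [int_comp_neg ζ]; exact hz h0⟩

private lemma energy_nonneg {B α : ℝ} (hB : 0 < B) {h : ℝ → ℝ}
    (hpos : ∀ x ∈ Set.Icc (-1 : ℝ) 1, 0 ≤ h x) (ψ ζ : ℝ → ℝ) :
    0 ≤ energyC B α h ψ ζ := by
  unfold energyC
  have h1 : (0:ℝ) ≤ ∫ x in (-1 : ℝ)..1, h x * ((deriv ψ x) ^ 2 + α ^ 2 * (ψ x) ^ 2) := by
    apply intervalIntegral.integral_nonneg (by norm_num)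
    intro u hu
    have := hpos u hu
    positivity
  have h2 : (0:ℝ) ≤ ∫ x in (-1 : ℝ)..1,
      ((1 + α ^ 2 / B) * (ζ x) ^ 2 + (1 / B) * (deriv ζ x) ^ 2) := by
    apply intervalIntegral.integral_nonneg (by norm_num)
    intro u _
    have : (0:ℝ) ≤ 1 + α ^ 2 / B := by positivity
    positivity
  nlinarith

private lemma energy_avg {B α : ℝ} {h₁ ψ ζ : ℝ → ℝ}
    (hc : ContinuousOn h₁ (Set.Icc (-1 : ℝ) 1)) (hψ : ContDiff ℝ 1 ψ) (hζ : ContDiff ℝ 1 ζ) :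
    energyC B α (fun x => (h₁ x + h₁ (-x)) / 2) ψ ζ =
      (energyC B α h₁ ψ ζ +
        energyC B α h₁ (fun x => ψ (-x)) (fun x => ζ (-x))) / 2 := by
  set q : ℝ → ℝ := fun x => (deriv ψ x) ^ 2 + α ^ 2 * (ψ x) ^ 2 with hq
  have hqc : Continuous q := by
    apply Continuous.add
    · exact (hψ.continuous_deriv le_rfl).pow 2
    · exact continuous_const.mul (hψ.continuous.pow 2)
  have hcneg : ContinuousOn (fun x => h₁ (-x)) (Set.Icc (-1 : ℝ) 1) := by
    apply hc.comp continuous_neg.continuousOn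
    intro x hx
    simp only [Set.mem_Icc] at hx ⊢
    constructor <;> linarith [hx.1, hx.2]
  have hi1 : IntervalIntegrable (fun x => h₁ x * q x / 2) MeasureTheory.volume (-1) 1 := by
    apply ContinuousOn.intervalIntegrable
    rw [uIccEq]
    exact ((hc.mul hqc.continuousOn).div_const 2)
  have hi2 : IntervalIntegrable (fun x => h₁ (-x) * q x / 2) MeasureTheory.volume (-1) 1 := by
    apply ContinuousOn.intervalIntegrable
    rw [uIccEq]
    exact ((hcneg.mul hqc.continuousOn).div_const 2)
  -- the ζ-part is invariant under reflection
  have hzeta : (∫ x in (-1 : ℝ)..1,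
      ((1 + α ^ 2 / B) * ((fun x => ζ (-x)) x) ^ 2
        + (1 / B) * (deriv (fun x => ζ (-x)) x) ^ 2)) =
      ∫ x in (-1 : ℝ)..1, ((1 + α ^ 2 / B) * (ζ x) ^ 2 + (1 / B) * (deriv ζ x) ^ 2) := by
    have : ∀ x, (1 + α ^ 2 / B) * ((fun x => ζ (-x)) x) ^ 2
        + (1 / B) * (deriv (fun x => ζ (-x)) x) ^ 2
        = (fun y => (1 + α ^ 2 / B) * (ζ y) ^ 2 + (1 / B) * (deriv ζ y) ^ 2) (-x) := by
      intro x
      simp only [deriv_comp_neg ζ, neg_sq]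
    rw [intervalIntegral.integral_congr (g := fun x =>
        (fun y => (1 + α ^ 2 / B) * (ζ y) ^ 2 + (1 / B) * (deriv ζ y) ^ 2) (-x))
        (fun x _ => this x)]
    exact int_comp_neg (fun y => (1 + α ^ 2 / B) * ζ y ^ 2 + 1 / B * deriv ζ y ^ 2)
  -- the reflected ψ-part
  have hpsirefl : (∫ x in (-1 : ℝ)..1,
      h₁ x * ((deriv (fun x => ψ (-x)) x) ^ 2 + α ^ 2 * ((fun x => ψ (-x)) x) ^ 2)) =
      ∫ x in (-1 : ℝ)..1, h₁ x * q (-x) := by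
    apply intervalIntegral.integral_congr
    intro x _
    simp only [q, deriv_comp_neg ψ, neg_sq]
  have hsub : (∫ x in (-1 : ℝ)..1, h₁ (-x) * q x / 2) =
      (∫ x in (-1 : ℝ)..1, h₁ x * q (-x)) / 2 := by
    rw [← intervalIntegral.integral_div]
    have : ∀ x : ℝ, h₁ (-x) * q x / 2 = (fun y => h₁ y * q (-y) / 2) (-x) := by
      intro x; simp
    rw [intervalIntegral.integral_congr (fun x _ => this x)]
    exact int_comp_neg (fun y => h₁ y * q (-y) / 2)
  have hsplit : (∫ x in (-1 : ℝ)..1, (h₁ x + h₁ (-x)) / 2 * q x) =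
      (∫ x in (-1 : ℝ)..1, h₁ x * q x / 2) + ∫ x in (-1 : ℝ)..1, h₁ (-x) * q x / 2 := by
    rw [← intervalIntegral.integral_add hi1 hi2]
    apply intervalIntegral.integral_congr
    intro x _; ring
  unfold energyC
  rw [hzeta, hpsirefl]
  rw [show (∫ x in (-1 : ℝ)..1, (fun x => (h₁ x + h₁ (-x)) / 2) x * ((deriv ψ x) ^ 2 + α ^ 2 * (ψ x) ^ 2)) = ∫ x in (-1 : ℝ)..1, (h₁ x + h₁ (-x)) / 2 * q x from rfl]
  rw [hsplit, hsub]
  simp only [hq]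
  have e1 : (∫ x in (-1:ℝ)..1, h₁ x * (deriv ψ x ^ 2 + α ^ 2 * ψ x ^ 2) / 2)
      = (∫ x in (-1:ℝ)..1, h₁ x * (deriv ψ x ^ 2 + α ^ 2 * ψ x ^ 2)) / 2 :=
    intervalIntegral.integral_div 2 _
  rw [e1]; ring

theorem symmetric_maximizer (A B α : ℝ) (hA : 0 < A) (hB : 0 < B) (hα : 0 ≤ α)
    (h₁ : ℝ → ℝ) (hh₁ : MemMA A h₁)
    (hmax : ∀ h : ℝ → ℝ, MemMA A h → Omega1 B α h ≤ Omega1 B α h₁) :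
    MemMA A (fun x => (h₁ x + h₁ (-x)) / 2) ∧
    (∀ x ∈ Set.Icc (-1 : ℝ) 1,
      (h₁ (-x) + h₁ (-(-x))) / 2 = (h₁ x + h₁ (-x)) / 2) ∧
    (∀ h : ℝ → ℝ, MemMA A h →
      Omega1 B α h ≤ Omega1 B α (fun x => (h₁ x + h₁ (-x)) / 2)) := by
  obtain ⟨hc, hpos, hint⟩ := hh₁
  have hcneg : ContinuousOn (fun x => h₁ (-x)) (Set.Icc (-1 : ℝ) 1) := by
    apply hc.comp continuous_neg.continuousOn
    intro x hx
    simp only [Set.mem_Icc] at hx ⊢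
    constructor <;> linarith [hx.1, hx.2]
  have hmem : MemMA A (fun x => (h₁ x + h₁ (-x)) / 2) := by
    refine ⟨(hc.add hcneg).div_const 2, ?_, ?_⟩
    · intro x hx
      have h1 := hpos x hx
      have h2 := hpos (-x) (by
        simp only [Set.mem_Icc] at hx ⊢
        constructor <;> linarith [hx.1, hx.2])
      positivity
    · have i1 : IntervalIntegrable h₁ MeasureTheory.volume (-1) 1 := by
        apply ContinuousOn.intervalIntegrable; rwa [uIccEq]
      have i2 : IntervalIntegrable (fun x => h₁ (-x)) MeasureTheory.volume (-1) 1 := by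
        apply ContinuousOn.intervalIntegrable; rwa [uIccEq]
      rw [show (fun x => (h₁ x + h₁ (-x)) / 2) = fun x => (h₁ x + h₁ (-x)) / 2 from rfl]
      calc (∫ x in (-1:ℝ)..1, (h₁ x + h₁ (-x)) / 2)
          = (∫ x in (-1:ℝ)..1, (h₁ x + h₁ (-x))) / 2 := intervalIntegral.integral_div 2 _
        _ = ((∫ x in (-1:ℝ)..1, h₁ x) + ∫ x in (-1:ℝ)..1, h₁ (-x)) / 2 := by
            rw [intervalIntegral.integral_add i1 i2]
        _ = A := by rw [int_comp_neg h₁, hint]; ring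
  refine ⟨hmem, fun x _ => by rw [neg_neg]; ring, ?_⟩
  intro h hh
  refine le_trans (hmax h hh) ?_
  -- suffices: Omega1 h₁ ≤ Omega1 h₃
  unfold Omega1
  set S₁ := {E : ℝ | ∃ ψ ζ : ℝ → ℝ, AdmissiblePair α ψ ζ ∧
    (∫ x in (-1 : ℝ)..1, ψ x * ζ x) = 1 ∧ E = energyC B α h₁ ψ ζ} with hS₁
  set S₃ := {E : ℝ | ∃ ψ ζ : ℝ → ℝ, AdmissiblePair α ψ ζ ∧
    (∫ x in (-1 : ℝ)..1, ψ x * ζ x) = 1 ∧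
      E = energyC B α (fun x => (h₁ x + h₁ (-x)) / 2) ψ ζ} with hS₃
  have hbdd : BddBelow S₁ := by
    refine ⟨0, fun e he => ?_⟩
    obtain ⟨ψ, ζ, _, _, rfl⟩ := he
    exact energy_nonneg hB hpos ψ ζ
  rcases Set.eq_empty_or_nonempty S₃ with hemp | hne
  · have hemp1 : S₁ = ∅ := by
      rw [Set.eq_empty_iff_forall_notMem] at hemp ⊢
      intro e ⟨ψ, ζ, ha, hg, _⟩
      exact hemp (energyC B α (fun x => (h₁ x + h₁ (-x)) / 2) ψ ζ) ⟨ψ, ζ, ha, hg, rfl⟩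
    rw [hemp, hemp1, Real.sInf_empty]
  · apply le_csInf hne
    intro e he
    obtain ⟨ψ, ζ, ha, hg, rfl⟩ := he
    have key := energy_avg (B := B) (α := α) hc ha.1 ha.2.1
    rw [key]
    have m1 : energyC B α h₁ ψ ζ ∈ S₁ := ⟨ψ, ζ, ha, hg, rfl⟩
    have m2 : energyC B α h₁ (fun x => ψ (-x)) (fun x => ζ (-x)) ∈ S₁ := by
      refine ⟨_, _, refl_admissible ha, ?_, rfl⟩
      rw [show (∫ x in (-1:ℝ)..1, (fun x => ψ (-x)) x * (fun x => ζ (-x)) x)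
          = ∫ x in (-1:ℝ)..1, (fun y => ψ y * ζ y) (-x) from rfl]
      exact (int_comp_neg _).trans hg
    have l1 := csInf_le hbdd m1
    have l2 := csInf_le hbdd m2
    linarith
end
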